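/- Let N, d be natural numbers and U_1, …, U_N unitary d×d complex matrices. The operator norm of the Feynman clock Hamiltonian H_U on ℂ^{N+1} ⊗ ℂ^d equals N. -/

import Mathlib

set_option linter.unusedSectionVars false
set_option maxHeartbeats 1000000


open Matrix Kronecker

/-- The Feynman clock Hamiltonian `H_U = Σ_{j=1}^{N} √(j(N−j+1)) (E_{j,j-1} ⊗ U_j +
E_{j-1,j} ⊗ U_j†)` on `ℂ^{N+1} ⊗ ℂ^d`. -/
noncomputable def clockHam (N d : ℕ) (U : Fin N → Matrix (Fin d) (Fin d) ℂ) :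
    Matrix (Fin (N + 1) × Fin d) (Fin (N + 1) × Fin d) ℂ :=
  ∑ j : Fin N, (Real.sqrt ((((j : ℕ) + 1) * (N - (j : ℕ)) : ℕ)) : ℂ) •
    ((Matrix.single j.succ j.castSucc (1 : ℂ)) ⊗ₖ U j +
      (Matrix.single j.castSucc j.succ (1 : ℂ)) ⊗ₖ (U j)ᴴ)

/-- The spectral (ℓ²-operator) norm of a complex matrix. -/
noncomputable def l2OpNorm {n : Type*} [Fintype n] [DecidableEq n]
    (A : Matrix n n ℂ) : ℝ :=
  ‖Matrix.toEuclideanCLM (𝕜 := ℂ) A‖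


open scoped InnerProductSpace

lemma aux_norm_le_of_forall_re_inner_le {E : Type*} [NormedAddCommGroup E]
    [InnerProductSpace ℂ E] [CompleteSpace E]
    (T : E →L[ℂ] E) (hT : IsSelfAdjoint T) {C : ℝ} (hC : 0 ≤ C)
    (h : ∀ x : E, |Complex.re (⟪T x, x⟫_ℂ)| ≤ C * ‖x‖ ^ 2) : ‖T‖ ≤ C := by
  apply T.opNorm_le_bound hC
  intro x
  rcases eq_or_ne (T x) 0 with h0 | h0
  · simp [h0, mul_nonneg hC (norm_nonneg x)]
  have hTx : (0:ℝ) < ‖T x‖ := norm_pos_iff.mpr h0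
  set y : E := ((‖x‖ / ‖T x‖ : ℝ) : ℂ) • T x with hy
  have hsym := hT.isSymmetric
  have hnormy : ‖y‖ = ‖x‖ := by
    have hc : ‖((‖x‖ / ‖T x‖ : ℝ) : ℂ)‖ = ‖x‖ / ‖T x‖ := by
      rw [Complex.norm_real, Real.norm_eq_abs, abs_of_nonneg (by positivity)]
    rw [hy, norm_smul, hc, div_mul_cancel₀ _ (ne_of_gt hTx)]
  have key : 4 * (Complex.re (⟪T x, y⟫_ℂ)) =
      Complex.re (⟪T (x + y), x + y⟫_ℂ) - Complex.re (⟪T (x - y), x - y⟫_ℂ) := by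
    have h1 : ⟪T y, x⟫_ℂ = ⟪y, T x⟫_ℂ := hsym.apply_clm y x
    have h2 : (⟪y, T x⟫_ℂ).re = (⟪T x, y⟫_ℂ).re := by
      rw [← inner_conj_symm (T x) y]; exact Complex.conj_re _
    have e1 : ⟪T (x + y), x + y⟫_ℂ
        = ⟪T x, x⟫_ℂ + ⟪T x, y⟫_ℂ + ⟪T y, x⟫_ℂ + ⟪T y, y⟫_ℂ := by
      rw [map_add]
      simp only [ContinuousLinearMap.add_apply, inner_add_left, inner_add_right]
      ring
    have e2 : ⟪T (x - y), x - y⟫_ℂ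
        = ⟪T x, x⟫_ℂ - ⟪T x, y⟫_ℂ - ⟪T y, x⟫_ℂ + ⟪T y, y⟫_ℂ := by
      rw [map_sub]
      simp only [ContinuousLinearMap.sub_apply, inner_sub_left, inner_sub_right]
      ring
    rw [e1, e2, h1]
    simp only [Complex.add_re, Complex.sub_re]
    rw [h2]
    ring
  have hre : Complex.re (⟪T x, y⟫_ℂ) = ‖x‖ * ‖T x‖ := by
    rw [hy, inner_smul_right, inner_self_eq_norm_sq_to_K]
    norm_cast
    field_simp
    simp only [Complex.mul_re, Complex.ofReal_re, Complex.ofReal_im, Algebra.cast,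
      Complex.coe_algebraMap, zero_mul, sub_zero]
    field_simp
  have hpar : ‖x + y‖ ^ 2 + ‖x - y‖ ^ 2 = 2 * (‖x‖ ^ 2 + ‖y‖ ^ 2) := by
    have := parallelogram_law_with_norm ℂ x y
    nlinarith [this]
  have hb : 4 * (‖x‖ * ‖T x‖) ≤ C * (‖x + y‖ ^ 2) + C * (‖x - y‖ ^ 2) := by
    rw [← hre, key]
    linarith [(abs_le.mp (h (x + y))).2, (abs_le.mp (h (x - y))).1]
  have hmain : 4 * (‖x‖ * ‖T x‖) ≤ 4 * (C * ‖x‖ ^ 2) := by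
    calc 4 * (‖x‖ * ‖T x‖) ≤ C * (‖x + y‖ ^ 2) + C * (‖x - y‖ ^ 2) := hb
    _ = C * (‖x + y‖ ^ 2 + ‖x - y‖ ^ 2) := by ring
    _ = C * (2 * (‖x‖ ^ 2 + ‖y‖ ^ 2)) := by rw [hpar]
    _ = 4 * (C * ‖x‖ ^ 2) := by rw [hnormy]; ring
  rcases eq_or_lt_of_le (norm_nonneg x) with hx0 | hx0
  · exfalso
    apply h0
    have hx : x = 0 := by rwa [eq_comm, norm_eq_zero] at hx0
    simp [hx]
  · have h4 : ‖x‖ * ‖T x‖ ≤ ‖x‖ * (C * ‖x‖) := by nlinarith [hmain]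
    have := le_of_mul_le_mul_left h4 hx0
    linarith [this]


namespace ClockAux

variable {n₁ n₂ : Type*} [Fintype n₁] [Fintype n₂] [DecidableEq n₁] [DecidableEq n₂]

lemma kron_conjTranspose (A : Matrix n₁ n₁ ℂ) (B : Matrix n₂ n₂ ℂ) :
    (A ⊗ₖ B)ᴴ = Aᴴ ⊗ₖ Bᴴ := by
  ext ⟨i, a⟩ ⟨k, b⟩
  simp only [conjTranspose_apply, kroneckerMap_apply]
  rw [StarMul.star_mul]
  ring

lemma std_conjTranspose (p q : n₁) : (Matrix.single p q (1 : ℂ))ᴴ = Matrix.single q p 1 := by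
  ext i k
  simp [conjTranspose_apply, Matrix.single, Matrix.of_apply, and_comm, apply_ite (starRingEnd ℂ)]

lemma sum_mulVec {ι : Type*} (s : Finset ι) (A : ι → Matrix n₁ n₁ ℂ) (v : n₁ → ℂ) :
    (∑ j ∈ s, A j) *ᵥ v = ∑ j ∈ s, A j *ᵥ v := by
  funext i
  simp only [Matrix.mulVec, dotProduct, Finset.sum_apply, Matrix.sum_apply, Finset.sum_mul]
  rw [Finset.sum_comm]

lemma mulVec_sum {ι : Type*} (s : Finset ι) (A : Matrix n₁ n₁ ℂ) (v : ι → (n₁ → ℂ)) :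
    A *ᵥ (∑ j ∈ s, v j) = ∑ j ∈ s, A *ᵥ v j := by
  funext i
  simp only [Finset.sum_apply, Matrix.mulVec, dotProduct, Finset.mul_sum]
  rw [Finset.sum_comm]

lemma mulVec_smul' (A : Matrix n₁ n₁ ℂ) (c : ℂ) (v : n₁ → ℂ) :
    A *ᵥ (c • v) = c • (A *ᵥ v) := by
  funext i
  simp only [Matrix.mulVec, dotProduct, Pi.smul_apply, smul_eq_mul, Finset.mul_sum]
  apply Finset.sum_congr rfl
  intros
  ring

lemma kron_mulVec (A : Matrix n₁ n₁ ℂ) (B : Matrix n₂ n₂ ℂ) (u : n₁ → ℂ) (v : n₂ → ℂ) :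
    (A ⊗ₖ B) *ᵥ (fun p : n₁ × n₂ => u p.1 * v p.2)
      = fun p : n₁ × n₂ => (A *ᵥ u) p.1 * (B *ᵥ v) p.2 := by
  funext p
  obtain ⟨i, a⟩ := p
  simp only [Matrix.mulVec, dotProduct, Fintype.sum_prod_type, kroneckerMap_apply]
  rw [Finset.sum_mul_sum]
  apply Finset.sum_congr rfl
  intro k _
  apply Finset.sum_congr rfl
  intro b _
  ring

lemma stdKron_mulVec (p q : n₁) (B : Matrix n₂ n₂ ℂ) (x : n₁ × n₂ → ℂ) (i : n₁) (a : n₂) :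
    ((Matrix.single p q 1 ⊗ₖ B) *ᵥ x) (i, a)
      = if p = i then (B *ᵥ fun b => x (q, b)) a else 0 := by
  simp only [Matrix.mulVec, dotProduct, Fintype.sum_prod_type, kroneckerMap_apply,
    Matrix.single, Matrix.of_apply, ite_and, ite_mul, one_mul, zero_mul]
  rcases eq_or_ne p i with h | h
  · subst h
    simp only [if_pos rfl]
    rw [Finset.sum_comm]
    simp [Finset.sum_ite_eq, mul_comm]
  · simp [h]

lemma dot_stdKron (p q : n₁) (B : Matrix n₂ n₂ ℂ) (x : n₁ × n₂ → ℂ) :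
    star x ⬝ᵥ ((Matrix.single p q 1 ⊗ₖ B) *ᵥ x)
      = star (fun b => x (p, b)) ⬝ᵥ (B *ᵥ fun b => x (q, b)) := by
  simp only [dotProduct, Fintype.sum_prod_type, Pi.star_apply, stdKron_mulVec,
    mul_ite, mul_zero]
  rw [Finset.sum_comm]
  simp [Finset.sum_ite_eq]

lemma conj_dot (M : Matrix n₂ n₂ ℂ) (u v : n₂ → ℂ) :
    star v ⬝ᵥ (Mᴴ *ᵥ u) = starRingEnd ℂ (star u ⬝ᵥ (M *ᵥ v)) := by
  simp only [dotProduct, Matrix.mulVec, map_sum, Pi.star_apply, conjTranspose_apply,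
    Finset.mul_sum]
  rw [Finset.sum_comm]
  apply Finset.sum_congr rfl
  intro a _
  apply Finset.sum_congr rfl
  intro b _
  simp only [_root_.map_mul, Complex.star_def, Complex.conj_conj]
  ring

lemma unit_norm_eq (M : Matrix n₂ n₂ ℂ) (hM : Mᴴ * M = 1) (v : n₂ → ℂ) :
    ‖(WithLp.equiv 2 (n₂ → ℂ)).symm (M *ᵥ v)‖ = ‖(WithLp.equiv 2 (n₂ → ℂ)).symm v‖ := by
  rw [norm_eq_sqrt_re_inner (𝕜 := ℂ), norm_eq_sqrt_re_inner (𝕜 := ℂ)]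
  congr 2
  rw [WithLp.equiv_symm_apply, EuclideanSpace.inner_toLp_toLp, EuclideanSpace.inner_toLp_toLp,
    dotProduct_comm (M *ᵥ v), dotProduct_comm v]
  rw [star_mulVec, ← dotProduct_mulVec, Matrix.mulVec_mulVec]
  rw [show Mᴴ * M = 1 from hM, Matrix.one_mulVec]

noncomputable def Pm (N d : ℕ) (U : Fin N → Matrix (Fin d) (Fin d) ℂ) :
    ℕ → Matrix (Fin d) (Fin d) ℂ
  | 0 => 1
  | (i + 1) => if h : i < N then U ⟨i, h⟩ * Pm N d U i else 1

lemma sqrt_helper (a b k c : ℝ) (ha : 0 ≤ a) (hk : 0 ≤ k)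
    (h : a * b = k ^ 2 * c) : Real.sqrt a * Real.sqrt b = k * Real.sqrt c := by
  rw [← Real.sqrt_mul ha, h, Real.sqrt_mul (sq_nonneg k), Real.sqrt_sq hk]

lemma choose_cast_id (N : ℕ) (j : Fin N) :
    ((N.choose ((j : ℕ) + 1) : ℝ)) * ((j : ℕ) + 1)
      = (N.choose (j : ℕ)) * ((N - (j : ℕ) : ℕ) : ℝ) := by
  exact_mod_cast congrArg (Nat.cast (R := ℝ)) (Nat.choose_succ_right_eq N (j : ℕ))

lemma S1 (N : ℕ) (j : Fin N) :
    Real.sqrt ((((j : ℕ) + 1) * (N - (j : ℕ)) : ℕ)) * Real.sqrt (N.choose (j : ℕ))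
      = ((j : ℕ) + 1 : ℝ) * Real.sqrt (N.choose ((j : ℕ) + 1)) := by
  apply sqrt_helper _ _ _ _ (by positivity) (by positivity)
  rw [Nat.cast_mul]
  push_cast [-Nat.cast_sub]
  linear_combination (-(j : ℝ) - 1) * (choose_cast_id N j)

lemma S2 (N : ℕ) (j : Fin N) :
    Real.sqrt ((((j : ℕ) + 1) * (N - (j : ℕ)) : ℕ)) * Real.sqrt (N.choose ((j : ℕ) + 1))
      = ((N - (j : ℕ) : ℕ) : ℝ) * Real.sqrt (N.choose (j : ℕ)) := by
  apply sqrt_helper _ _ _ _ (by positivity) (by positivity)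
  rw [Nat.cast_mul]
  push_cast [-Nat.cast_sub]
  linear_combination ((N - (j : ℕ) : ℕ) : ℝ) * (choose_cast_id N j)

end ClockAux


namespace ClockAux

lemma dot_sum {n : Type*} [Fintype n] {ι : Type*} (s : Finset ι) (u : n → ℂ) (v : ι → (n → ℂ)) :
    u ⬝ᵥ (∑ j ∈ s, v j) = ∑ j ∈ s, u ⬝ᵥ v j := by
  simp only [dotProduct, Finset.sum_apply, Finset.mul_sum]
  rw [Finset.sum_comm]

lemma quad (N d : ℕ) (U : Fin N → Matrix (Fin d) (Fin d) ℂ)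
    (hU : ∀ j, U j ∈ Matrix.unitaryGroup (Fin d) ℂ) (x : Fin (N + 1) × Fin d → ℂ) :
    |Complex.re (star x ⬝ᵥ (clockHam N d U *ᵥ x))|
      ≤ N * ∑ p : Fin (N + 1) × Fin d, ‖x p‖ ^ 2 := by
  set nb : Fin (N + 1) → ℝ :=
    fun i => ‖(WithLp.equiv 2 (Fin d → ℂ)).symm (fun a => x (i, a))‖ with hnbdef
  have hnbnn : ∀ i, 0 ≤ nb i := fun i => norm_nonneg _
  have hnb : ∀ i, nb i ^ 2 = ∑ a, ‖x (i, a)‖ ^ 2 := by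
    intro i
    simp only [hnbdef, EuclideanSpace.norm_eq]
    rw [Real.sq_sqrt (by positivity)]
    simp [WithLp.equiv_symm_apply, PiLp.toLp_apply]
  set z : Fin N → ℂ :=
    fun j => star (fun b => x (j.succ, b)) ⬝ᵥ (U j *ᵥ fun b => x (j.castSucc, b)) with hzdef
  set cc : Fin N → ℝ :=
    fun j => Real.sqrt ((((j : ℕ) + 1) * (N - (j : ℕ)) : ℕ)) with hccdef
  have hccnn : ∀ j, 0 ≤ cc j := fun j => Real.sqrt_nonneg _
  have hz : star x ⬝ᵥ (clockHam N d U *ᵥ x)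
      = ∑ j : Fin N, (cc j : ℂ) * (z j + starRingEnd ℂ (z j)) := by
    rw [clockHam, sum_mulVec, dot_sum]
    apply Finset.sum_congr rfl
    intro j _
    rw [smul_mulVec, dotProduct_smul, add_mulVec, dotProduct_add]
    rw [dot_stdKron, dot_stdKron, conj_dot]
    simp only [smul_eq_mul, mul_add, hzdef, hccdef]
  have hre : Complex.re (star x ⬝ᵥ (clockHam N d U *ᵥ x))
      = ∑ j : Fin N, cc j * (2 * (z j).re) := by
    rw [hz, Complex.re_sum]
    apply Finset.sum_congr rfl
    intro j _
    rw [Complex.add_conj, ← Complex.ofReal_mul, Complex.ofReal_re]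
  have hzb : ∀ j : Fin N, |(z j).re| ≤ nb j.succ * nb j.castSucc := by
    intro j
    have hinner : z j = ⟪(WithLp.equiv 2 (Fin d → ℂ)).symm (fun b => x (j.succ, b)),
        (WithLp.equiv 2 (Fin d → ℂ)).symm (U j *ᵥ fun b => x (j.castSucc, b))⟫_ℂ := by
      rw [WithLp.equiv_symm_apply, EuclideanSpace.inner_toLp_toLp]
      exact dotProduct_comm _ _
    have h1 : |(z j).re| ≤ ‖z j‖ := Complex.abs_re_le_norm _
    have h2 : ‖z j‖ ≤ nb j.succ * nb j.castSucc := by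
      rw [hinner]
      refine (norm_inner_le_norm _ _).trans_eq ?_
      congr 1
      apply unit_norm_eq
      rw [← Matrix.star_eq_conjTranspose]
      exact (Matrix.mem_unitaryGroup_iff'.mp (hU j))
    exact h1.trans h2
  rw [hre]
  have step1 : |∑ j : Fin N, cc j * (2 * (z j).re)|
      ≤ ∑ j : Fin N, (((N - (j : ℕ) : ℕ) : ℝ) * nb j.castSucc ^ 2
          + ((j : ℕ) + 1 : ℝ) * nb j.succ ^ 2) := by
    refine (Finset.abs_sum_le_sum_abs _ _).trans (Finset.sum_le_sum ?_)
    intro j _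
    have h3 : |cc j * (2 * (z j).re)| ≤ cc j * (2 * (nb j.succ * nb j.castSucc)) := by
      rw [abs_mul, abs_of_nonneg (hccnn j), abs_mul, Nat.abs_ofNat]
      have := hzb j
      nlinarith [hccnn j, hzb j, abs_nonneg ((z j).re)]
    refine h3.trans ?_
    have hA : (0 : ℝ) ≤ ((j : ℕ) + 1 : ℝ) := by positivity
    have hB : (0 : ℝ) ≤ ((N - (j : ℕ) : ℕ) : ℝ) := by positivity
    have hcc2 : cc j = Real.sqrt ((j : ℕ) + 1 : ℝ) * Real.sqrt ((N - (j : ℕ) : ℕ) : ℝ) := by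
      rw [hccdef]
      rw [← Real.sqrt_mul hA]
      norm_cast
    rw [hcc2]
    nlinarith [sq_nonneg (Real.sqrt ((N - (j : ℕ) : ℕ) : ℝ) * nb j.castSucc
        - Real.sqrt ((j : ℕ) + 1 : ℝ) * nb j.succ),
      Real.sq_sqrt hA, Real.sq_sqrt hB, Real.sqrt_nonneg ((j : ℕ) + 1 : ℝ),
      Real.sqrt_nonneg ((N - (j : ℕ) : ℕ) : ℝ), hnbnn j.succ, hnbnn j.castSucc,
      mul_nonneg (Real.sqrt_nonneg ((j : ℕ) + 1 : ℝ)) (hnbnn j.succ),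
      mul_nonneg (Real.sqrt_nonneg ((N - (j : ℕ) : ℕ) : ℝ)) (hnbnn j.castSucc)]
  have step2 : ∑ j : Fin N, (((N - (j : ℕ) : ℕ) : ℝ) * nb j.castSucc ^ 2
      + ((j : ℕ) + 1 : ℝ) * nb j.succ ^ 2) = N * ∑ i : Fin (N + 1), nb i ^ 2 := by
    rw [Finset.sum_add_distrib]
    have e1 : ∑ j : Fin N, ((N - (j : ℕ) : ℕ) : ℝ) * nb j.castSucc ^ 2
        = ∑ i : Fin (N + 1), ((N - (i : ℕ) : ℕ) : ℝ) * nb i ^ 2 := by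
      rw [Fin.sum_univ_castSucc]
      simp
    have e2 : ∑ j : Fin N, ((j : ℕ) + 1 : ℝ) * nb j.succ ^ 2
        = ∑ i : Fin (N + 1), ((i : ℕ) : ℝ) * nb i ^ 2 := by
      rw [Fin.sum_univ_succ]
      simp
    rw [e1, e2, ← Finset.sum_add_distrib, Finset.mul_sum]
    apply Finset.sum_congr rfl
    intro i _
    have : ((N - (i : ℕ) : ℕ) : ℝ) + ((i : ℕ) : ℝ) = (N : ℝ) := by
      rw [← Nat.cast_add]
      congr 1
      omega
    nlinarith [this]
  have step3 : ∑ p : Fin (N + 1) × Fin d, ‖x p‖ ^ 2 = ∑ i : Fin (N + 1), nb i ^ 2 := by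
    rw [Fintype.sum_prod_type]
    exact Finset.sum_congr rfl fun i _ => (hnb i).symm
  rw [step3]
  calc |∑ j : Fin N, cc j * (2 * (z j).re)| ≤ _ := step1
  _ = N * ∑ i : Fin (N + 1), nb i ^ 2 := step2

end ClockAux

namespace ClockAux

def vk {n₁ n₂ : Type*} (u : n₁ → ℂ) (vv : n₂ → ℂ) : n₁ × n₂ → ℂ := fun p => u p.1 * vv p.2

lemma kron_mulVec_vk {n₁ n₂ : Type*} [Fintype n₁] [Fintype n₂] [DecidableEq n₁] [DecidableEq n₂]
    (A : Matrix n₁ n₁ ℂ) (B : Matrix n₂ n₂ ℂ) (u : n₁ → ℂ) (vv : n₂ → ℂ) :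
    (A ⊗ₖ B) *ᵥ vk u vv = vk (A *ᵥ u) (B *ᵥ vv) := by
  have := kron_mulVec A B u vv
  exact this

lemma vk_zero {n₁ n₂ : Type*} (vv : n₂ → ℂ) : vk (0 : n₁ → ℂ) vv = 0 := by
  funext p; simp [vk]

lemma std_mulVec {n₁ : Type*} [Fintype n₁] [DecidableEq n₁] (p q : n₁) (u : n₁ → ℂ) (k : n₁) :
    (Matrix.single p q (1 : ℂ) *ᵥ u) k = if p = k then u q else 0 := by
  simp only [Matrix.mulVec, dotProduct, Matrix.single, Matrix.of_apply, ite_and, ite_mul,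
    one_mul, zero_mul]
  rcases eq_or_ne p k with h | h
  · subst h
    simp [Finset.sum_ite_eq]
  · simp [h]

lemma std_mulVec_single {n₁ : Type*} [Fintype n₁] [DecidableEq n₁] (p q i : n₁) :
    Matrix.single p q (1 : ℂ) *ᵥ Pi.single i 1 = if i = q then Pi.single p 1 else 0 := by
  funext k
  rw [std_mulVec]
  by_cases h1 : p = k <;> by_cases h2 : i = q <;>
    simp [h1, h2, Pi.single_apply, eq_comm]

lemma Pm_succ (N d : ℕ) (U : Fin N → Matrix (Fin d) (Fin d) ℂ) (j : Fin N) :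
    Pm N d U ((j : ℕ) + 1) = U j * Pm N d U (j : ℕ) := by
  simp [Pm, j.isLt]

lemma eigen (N d : ℕ) (hd : 0 < d) (U : Fin N → Matrix (Fin d) (Fin d) ℂ)
    (hU : ∀ j, U j ∈ Matrix.unitaryGroup (Fin d) ℂ) :
    ∃ w : Fin (N + 1) × Fin d → ℂ, w (0, ⟨0, hd⟩) = 1 ∧
      clockHam N d U *ᵥ w = (N : ℂ) • w := by
  set a0 : Fin d := ⟨0, hd⟩ with ha0
  set e : Fin d → ℂ := Pi.single a0 1 with he
  set v : ℕ → Fin d → ℂ := fun n => Pm N d U n *ᵥ e with hv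
  set F : Fin (N + 1) → (Fin (N + 1) × Fin d → ℂ) :=
    fun i => (Real.sqrt (N.choose (i : ℕ)) : ℂ) • vk (Pi.single i (1 : ℂ)) (v (i : ℕ)) with hF
  refine ⟨∑ i, F i, ?_, ?_⟩
  · rw [Finset.sum_apply]
    rw [Finset.sum_eq_single (0 : Fin (N + 1))]
    · simp [hF, vk, hv, Pm, he]
    · intro b _ hb
      simp [hF, vk, Pi.single_eq_of_ne (Ne.symm hb)]
    · intro h; exact absurd (Finset.mem_univ _) h
  · -- the eigenvalue equation
    have hUnit : ∀ j : Fin N, (U j)ᴴ * U j = 1 := by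
      intro j
      rw [← Matrix.star_eq_conjTranspose]
      exact Matrix.mem_unitaryGroup_iff'.mp (hU j)
    have hM1 : ∀ j : Fin N,
        (Matrix.single j.succ j.castSucc (1 : ℂ) ⊗ₖ U j) *ᵥ (∑ i, F i)
          = (Real.sqrt (N.choose (j : ℕ)) : ℂ) •
              vk (Pi.single j.succ (1 : ℂ)) (v ((j : ℕ) + 1)) := by
      intro j
      rw [mulVec_sum]
      have hterm : ∀ i : Fin (N + 1),
          (Matrix.single j.succ j.castSucc (1 : ℂ) ⊗ₖ U j) *ᵥ F i
            = if i = j.castSucc then (Real.sqrt (N.choose (i : ℕ)) : ℂ) •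
                vk (Pi.single j.succ (1 : ℂ)) (U j *ᵥ v (i : ℕ)) else 0 := by
        intro i
        rw [hF]
        simp only []
        rw [mulVec_smul', kron_mulVec_vk, std_mulVec_single]
        split_ifs with h
        · rfl
        · rw [vk_zero, smul_zero]
      rw [Finset.sum_congr rfl (fun i _ => hterm i), Finset.sum_ite_eq' Finset.univ]
      rw [if_pos (Finset.mem_univ _)]
      have : U j *ᵥ v ((j.castSucc : ℕ)) = v ((j : ℕ) + 1) := by
        rw [hv]
        simp only [Fin.coe_castSucc]
        rw [Matrix.mulVec_mulVec, ← Pm_succ]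
      rw [this, Fin.coe_castSucc]
    have hM2 : ∀ j : Fin N,
        (Matrix.single j.castSucc j.succ (1 : ℂ) ⊗ₖ (U j)ᴴ) *ᵥ (∑ i, F i)
          = (Real.sqrt (N.choose ((j : ℕ) + 1)) : ℂ) •
              vk (Pi.single j.castSucc (1 : ℂ)) (v (j : ℕ)) := by
      intro j
      rw [mulVec_sum]
      have hterm : ∀ i : Fin (N + 1),
          (Matrix.single j.castSucc j.succ (1 : ℂ) ⊗ₖ (U j)ᴴ) *ᵥ F i
            = if i = j.succ then (Real.sqrt (N.choose (i : ℕ)) : ℂ) •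
                vk (Pi.single j.castSucc (1 : ℂ)) ((U j)ᴴ *ᵥ v (i : ℕ)) else 0 := by
        intro i
        rw [hF]
        simp only []
        rw [mulVec_smul', kron_mulVec_vk, std_mulVec_single]
        split_ifs with h
        · rfl
        · rw [vk_zero, smul_zero]
      rw [Finset.sum_congr rfl (fun i _ => hterm i), Finset.sum_ite_eq' Finset.univ]
      rw [if_pos (Finset.mem_univ _)]
      have : (U j)ᴴ *ᵥ v ((j.succ : ℕ)) = v (j : ℕ) := by
        rw [hv]
        simp only [Fin.val_succ]
        rw [Pm_succ, ← Matrix.mulVec_mulVec, Matrix.mulVec_mulVec]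
        rw [hUnit j, Matrix.one_mulVec]
      rw [this, Fin.val_succ]
    rw [clockHam, sum_mulVec]
    set G : Fin (N + 1) → (Fin (N + 1) × Fin d → ℂ) :=
      fun i => (((i : ℕ) : ℂ)) • F i with hG
    set Hh : Fin (N + 1) → (Fin (N + 1) × Fin d → ℂ) :=
      fun i => (((N - (i : ℕ) : ℕ) : ℂ)) • F i with hH
    have hkey : ∀ j : Fin N,
        ((Real.sqrt ((((j : ℕ) + 1) * (N - (j : ℕ)) : ℕ)) : ℂ) •
          ((Matrix.single j.succ j.castSucc (1 : ℂ)) ⊗ₖ U j +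
            (Matrix.single j.castSucc j.succ (1 : ℂ)) ⊗ₖ (U j)ᴴ)) *ᵥ (∑ i, F i)
          = G j.succ + Hh j.castSucc := by
      intro j
      rw [smul_mulVec, add_mulVec, smul_add, hM1 j, hM2 j, smul_smul, smul_smul]
      congr 1
      · rw [hG]
        simp only [hF, Fin.val_succ]
        rw [smul_smul]
        congr 1
        rw [← Complex.ofReal_mul, S1 N j]
        push_cast
        ring
      · rw [hH]
        simp only [hF, Fin.coe_castSucc]
        rw [smul_smul]
        congr 1
        rw [← Complex.ofReal_mul, S2 N j]
        push_cast [-Nat.cast_sub]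
        ring
    rw [Finset.sum_congr rfl (fun j _ => hkey j), Finset.sum_add_distrib]
    have e1 : ∑ j : Fin N, G j.succ = ∑ i : Fin (N + 1), G i := by
      rw [Fin.sum_univ_succ]
      simp [hG]
    have e2 : ∑ j : Fin N, Hh j.castSucc = ∑ i : Fin (N + 1), Hh i := by
      rw [Fin.sum_univ_castSucc]
      simp [hH]
    rw [e1, e2, ← Finset.sum_add_distrib, Finset.smul_sum]
    apply Finset.sum_congr rfl
    intro i _
    rw [hG, hH]
    simp only []
    rw [← add_smul, ← Nat.cast_add]
    congr 2
    have := Fin.is_le i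
    omega

end ClockAux

namespace ClockAux

lemma herm (N d : ℕ) (U : Fin N → Matrix (Fin d) (Fin d) ℂ) :
    (clockHam N d U)ᴴ = clockHam N d U := by
  rw [clockHam, Matrix.conjTranspose_sum]
  apply Finset.sum_congr rfl
  intro j _
  rw [Matrix.conjTranspose_smul, Matrix.conjTranspose_add, kron_conjTranspose,
    kron_conjTranspose, std_conjTranspose, std_conjTranspose,
    Matrix.conjTranspose_conjTranspose]
  rw [Complex.star_def, Complex.conj_ofReal]
  congr 1
  exact add_comm _ _

end ClockAux


open ClockAux in
/-- The operator norm of the Feynman clock Hamiltonian on `ℂ^{N+1} ⊗ ℂ^d` equals `N`. -/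
theorem clockHam_opNorm (N d : ℕ) (hd : 0 < d) (U : Fin N → Matrix (Fin d) (Fin d) ℂ)
    (hU : ∀ j, U j ∈ Matrix.unitaryGroup (Fin d) ℂ) :
    l2OpNorm (clockHam N d U) = N := by
  classical
  set H := clockHam N d U with hHdef
  set T := Matrix.toEuclideanCLM (𝕜 := ℂ) H with hT
  have hsa : IsSelfAdjoint T := by
    rw [hT]
    show star (Matrix.toEuclideanCLM (𝕜 := ℂ) H) = Matrix.toEuclideanCLM (𝕜 := ℂ) H
    rw [← map_star]
    congr 1
    rw [Matrix.star_eq_conjTranspose, hHdef, herm]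
  have upper : ‖T‖ ≤ (N : ℝ) := by
    apply aux_norm_le_of_forall_re_inner_le T hsa (by positivity)
    intro x
    set f : Fin (N + 1) × Fin d → ℂ := WithLp.equiv 2 _ x with hf
    have hx : x = (WithLp.equiv 2 _).symm f := by rw [hf]; simp
    have h1 : ⟪T x, x⟫_ℂ = starRingEnd ℂ (⟪x, T x⟫_ℂ) := (inner_conj_symm _ _).symm
    have h2 : ⟪x, T x⟫_ℂ = star f ⬝ᵥ (H *ᵥ f) := by
      rw [hT, hx, WithLp.equiv_symm_apply, Matrix.toEuclideanCLM_toLp,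
        EuclideanSpace.inner_toLp_toLp, dotProduct_comm]
    have h3 : |Complex.re ⟪T x, x⟫_ℂ| = |Complex.re (star f ⬝ᵥ (H *ᵥ f))| := by
      rw [h1, Complex.conj_re, h2]
    rw [h3, hHdef]
    refine (quad N d U hU f).trans_eq ?_
    congr 1
    rw [hx, EuclideanSpace.norm_eq, Real.sq_sqrt (by positivity)]
    simp [WithLp.equiv_symm_apply, PiLp.toLp_apply]
  have lower : (N : ℝ) ≤ ‖T‖ := by
    obtain ⟨w, hw1, hw2⟩ := eigen N d hd U hU
    set W : EuclideanSpace ℂ (Fin (N + 1) × Fin d) := (WithLp.equiv 2 _).symm w with hW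
    have hTW : T W = (N : ℂ) • W := by
      rw [hW, hT, WithLp.equiv_symm_apply, Matrix.toEuclideanCLM_toLp]
      rw [hHdef, hw2, WithLp.toLp_smul]
    have hWne : W ≠ 0 := by
      intro h
      have hww : w = 0 := by
        have := congrArg (WithLp.equiv 2 (Fin (N + 1) × Fin d → ℂ)) h
        simpa [hW] using this
      rw [hww] at hw1
      simp at hw1
    have h5 : ‖T W‖ = N * ‖W‖ := by
      rw [hTW, norm_smul]
      simp
    have h6 := T.le_opNorm W
    rw [h5] at h6
    have hWpos : 0 < ‖W‖ := norm_pos_iff.mpr hWne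
    exact le_of_mul_le_mul_right (by linarith) hWpos
  have hdef : l2OpNorm (clockHam N d U) = ‖T‖ := rfl
  rw [hdef]
  exact le_antisymm upper lower
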